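/- Let S be a finite poset and T ⊆ S. For the poset S_{S∖T} = (S∖T) ∪ â(T), one has the equality of functors res^{S_{S∖T}}_{â(T)} ∘ coind^{S_{S∖T}}_S = coind^{â(T)}_T ∘ res^S_T from S-spaces to â(T)-spaces. Concretely, for an S-space V and any nonempty antichain A = {a_1,…,a_m} of T, both sides assign the subspace V(a_1) ∩ … ∩ V(a_m). -/

import Mathlib

/-- An `S`-space over a field `k`: a finite-dimensional `k`-vector space together with a
monotone family of subspaces indexed by the poset `S`. -/
structure PSp (k : Type) [Field k] (S : Type) [Preorder S] where
  carrier : Type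
  [acg : AddCommGroup carrier]
  [mod : Module k carrier]
  [fin : FiniteDimensional k carrier]
  sub : S → Submodule k carrier
  mono : ∀ {s t : S}, s ≤ t → sub s ≤ sub t

attribute [instance] PSp.acg PSp.mod PSp.fin

variable {k : Type} [Field k] {S : Type} [PartialOrder S] [Fintype S]

/-- A morphism of `S`-spaces: a `k`-linear map respecting the distinguished subspaces. -/
@[ext]
structure PHom (U V : PSp k S) where
  toLinearMap : U.carrier →ₗ[k] V.carrier
  maps : ∀ s : S, ∀ x ∈ U.sub s, toLinearMap x ∈ V.sub s

/-- Composition of morphisms of `S`-spaces. -/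
def PHom.comp {U V W : PSp k S} (g : PHom V W) (f : PHom U V) : PHom U W :=
  ⟨g.toLinearMap ∘ₗ f.toLinearMap, fun s x hx => g.maps s _ (f.maps s x hx)⟩

/-- The identity morphism of an `S`-space. -/
def PHom.id (U : PSp k S) : PHom U U := ⟨LinearMap.id, fun _ _ hx => hx⟩

/-- A morphism `f : U → V` of `S`-spaces is proper if `f(U(s)) = V(s) ∩ im f` for all `s`. -/
def PHom.Proper {U V : PSp k S} (f : PHom U V) : Prop :=
  ∀ s : S, (U.sub s).map f.toLinearMap = V.sub s ⊓ LinearMap.range f.toLinearMap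

/-- Restriction of a `Q`-space along a monotone map `ι : P → Q` of posets. -/
def resA {P Q : Type} [Preorder P] [Preorder Q] (ι : P → Q) (hι : Monotone ι)
    (V : PSp k Q) : PSp k P where
  carrier := V.carrier
  sub p := V.sub (ι p)
  mono h := V.mono (hι h)

/-- Coinduction of a `P`-space along a map `ι : P → Q`:
`X(q) = ∩_{p, q ≤ ι p} V(p)`. -/
def coindA {P Q : Type} [Preorder P] [Preorder Q] (ι : P → Q) (V : PSp k P) :
    PSp k Q where
  carrier := V.carrier
  sub q := ⨅ (p : P) (_ : q ≤ ι p), V.sub p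
  mono := by
    intro s t h
    refine le_iInf fun p => le_iInf fun hp => ?_
    exact iInf_le_of_le p (iInf_le_of_le (h.trans hp) le_rfl)

/-- The antichain order: `A ≤ B` iff every element of `B` lies above some element of `A`. -/
def ALe {α : Type} [Preorder α] (A B : Set α) : Prop := ∀ b ∈ B, ∃ a ∈ A, a ≤ b

lemma ALe_antisymm {α : Type} [PartialOrder α] {A B : Set α}
    (hA : IsAntichain (· ≤ ·) A) (hB : IsAntichain (· ≤ ·) B)
    (h1 : ALe A B) (h2 : ALe B A) : A = B := by
  have key : ∀ {X Y : Set α}, IsAntichain (· ≤ ·) X → ALe X Y → ALe Y X → X ⊆ Y := by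
    intro X Y hX hXY hYX x hx
    obtain ⟨y, hy, hyx⟩ := hYX x hx
    obtain ⟨x', hx', hx'y⟩ := hXY y hy
    have hxx : x' ≤ x := hx'y.trans hyx
    have hxe : x' = x := by
      by_contra hne
      exact hX hx' hx hne hxx
    subst hxe
    have : x' = y := le_antisymm hx'y hyx
    exact this ▸ hy
  exact Set.Subset.antisymm (key hA h1 h2) (key hB h2 h1)

variable {α : Type} [PartialOrder α] [Fintype α]

/-- The poset `â(T)` of nonempty antichains of `T`. -/
def AntiT (T : Set α) : Type := {A : Set α // A.Nonempty ∧ IsAntichain (· ≤ ·) A ∧ A ⊆ T}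

/-- The poset `S_{S∖T} = (S∖T) ∪ â(T)`. -/
def SST (T : Set α) : Type :=
  {A : Set α // (∃ s ∉ T, A = {s}) ∨ (A.Nonempty ∧ IsAntichain (· ≤ ·) A ∧ A ⊆ T)}

instance (T : Set α) : PartialOrder (AntiT T) where
  le A B := ALe A.1 B.1
  le_refl A b hb := ⟨b, hb, le_rfl⟩
  le_trans A B C h1 h2 c hc := by
    obtain ⟨b, hb, hbc⟩ := h2 c hc
    obtain ⟨a, ha, hab⟩ := h1 b hb
    exact ⟨a, ha, hab.trans hbc⟩
  le_antisymm A B h1 h2 := Subtype.ext (ALe_antisymm A.2.2.1 B.2.2.1 h1 h2)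

lemma SST_antichain {T : Set α} (A : SST T) : IsAntichain (· ≤ ·) A.1 := by
  rcases A.2 with ⟨s, _, hs⟩ | ⟨_, h, _⟩
  · rw [hs]; exact Set.subsingleton_singleton.isAntichain _
  · exact h

instance (T : Set α) : PartialOrder (SST T) where
  le A B := ALe A.1 B.1
  le_refl A b hb := ⟨b, hb, le_rfl⟩
  le_trans A B C h1 h2 c hc := by
    obtain ⟨b, hb, hbc⟩ := h2 c hc
    obtain ⟨a, ha, hab⟩ := h1 b hb
    exact ⟨a, ha, hab.trans hbc⟩
  le_antisymm A B h1 h2 :=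
    Subtype.ext (ALe_antisymm (SST_antichain A) (SST_antichain B) h1 h2)

/-- The embedding of `S` into `S_{S∖T}` by singleton antichains. -/
noncomputable def sstOf (T : Set α) (s : α) : SST T :=
  ⟨{s}, by
    by_cases h : s ∈ T
    · exact Or.inr ⟨⟨s, rfl⟩, Set.subsingleton_singleton.isAntichain _,
        Set.singleton_subset_iff.mpr h⟩
    · exact Or.inl ⟨s, h, rfl⟩⟩

lemma sstOf_mono (T : Set α) : Monotone (sstOf T) := by
  intro s t h b hb
  rw [show (sstOf T t).1 = {t} from rfl, Set.mem_singleton_iff] at hb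
  exact ⟨s, rfl, hb ▸ h⟩

/-- The inclusion of `â(T)` into `S_{S∖T}`. -/
noncomputable def sstOfAnti (T : Set α) (A : AntiT T) : SST T := ⟨A.1, Or.inr A.2⟩

lemma sstOfAnti_mono (T : Set α) : Monotone (sstOfAnti T) := fun _ _ h => h

/-- The embedding of `T` into `â(T)` by singleton antichains. -/
noncomputable def antiOf (T : Set α) (t : ↥T) : AntiT T :=
  ⟨{(t : α)}, ⟨(t : α), rfl⟩, Set.subsingleton_singleton.isAntichain _,
    Set.singleton_subset_iff.mpr t.2⟩

lemma val_mono (T : Set α) : Monotone (Subtype.val : ↥T → α) := fun _ _ h => h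

/-- `res^{S_{S∖T}}_{â(T)} ∘ coind^{S_{S∖T}}_S = coind^{â(T)}_T ∘ res^S_T` as
functors from `S`-spaces to `â(T)`-spaces; concretely, for an `S`-space `V` and a nonempty
antichain `A = {a_1,…,a_m}` of `T`, both sides assign the subspace `V(a_1) ∩ … ∩ V(a_m)`. -/
theorem stmt13 (T : Set α) (V : PSp k α) :
    resA (sstOfAnti T) (sstOfAnti_mono T) (coindA (sstOf T) V) =
      coindA (antiOf T) (resA (Subtype.val : ↥T → α) (val_mono T) V) ∧
    ∀ A : AntiT T,
      (resA (sstOfAnti T) (sstOfAnti_mono T) (coindA (sstOf T) V)).sub A =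
        ⨅ a ∈ A.1, V.sub a := by
  have hL : ∀ A : AntiT T,
      (resA (sstOfAnti T) (sstOfAnti_mono T) (coindA (sstOf T) V)).sub A =
        ⨅ a ∈ A.1, V.sub a := by
    intro A
    show (⨅ (s : α) (_ : sstOfAnti T A ≤ sstOf T s), V.sub s) = ⨅ a ∈ A.1, V.sub a
    apply le_antisymm
    · refine le_iInf fun a => le_iInf fun ha => ?_
      exact iInf_le_of_le a (iInf_le_of_le (fun b hb => ⟨a, ha, hb ▸ le_rfl⟩) le_rfl)
    · refine le_iInf fun s => le_iInf fun hs => ?_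
      obtain ⟨a, ha, has⟩ := hs s rfl
      exact iInf_le_of_le a (iInf_le_of_le ha (V.mono has))
  have hR : ∀ A : AntiT T,
      (coindA (antiOf T) (resA (Subtype.val : ↥T → α) (val_mono T) V)).sub A =
        ⨅ a ∈ A.1, V.sub a := by
    intro A
    show (⨅ (t : ↥T) (_ : A ≤ antiOf T t), V.sub (t : α)) = ⨅ a ∈ A.1, V.sub a
    apply le_antisymm
    · refine le_iInf fun a => le_iInf fun ha => ?_
      refine iInf_le_of_le ⟨a, A.2.2.2 ha⟩ (iInf_le_of_le ?_ le_rfl)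
      exact fun b hb => ⟨a, ha, hb ▸ le_rfl⟩
    · refine le_iInf fun t => le_iInf fun ht => ?_
      obtain ⟨a, ha, hat⟩ := ht (t : α) rfl
      exact iInf_le_of_le a (iInf_le_of_le ha (V.mono hat))
  refine ⟨?_, hL⟩
  have hsub : (resA (sstOfAnti T) (sstOfAnti_mono T) (coindA (sstOf T) V)).sub =
      (coindA (antiOf T) (resA (Subtype.val : ↥T → α) (val_mono T) V)).sub := by
    funext A; rw [hL A, hR A]
  show PSp.mk (k := k) V.carrier _ _ =
    PSp.mk (k := k) V.carrier _ _
  congr 1
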